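/- For every integer k ≥ 1, the k-th coefficient of the exponential-type generating function 1/(2 − e^x) (i.e. [x^k] 1/(2−e^x)) satisfies [x^k] 1/(2−e^x) ≤ 1/(log 2)^k. -/

import Mathlib

open PowerSeries Finset

lemma cusick14_aux (n : ℕ) :
    PowerSeries.coeff n (2 - PowerSeries.exp ℝ)⁻¹ ≤ (Real.log 2)⁻¹ ^ n := by
  have hL : 0 < Real.log 2 := Real.log_pos one_lt_two
  have hconst : PowerSeries.constantCoeff (2 - PowerSeries.exp ℝ) = 1 := by
    simp [PowerSeries.constantCoeff_exp, map_ofNat]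
    norm_num
  induction n using Nat.strong_induction_on with
  | _ n ih =>
    rcases Nat.eq_zero_or_pos n with rfl | hn
    · simp [PowerSeries.coeff_zero_eq_constantCoeff, PowerSeries.constantCoeff_inv, hconst]
    · rw [PowerSeries.coeff_inv, if_neg hn.ne', hconst,
        Finset.Nat.sum_antidiagonal_eq_sum_range_succ_mk]
      dsimp only
      have hcoeff : ∀ k : ℕ, PowerSeries.coeff (k + 1) (2 - PowerSeries.exp ℝ)
          = -(((k + 1).factorial : ℝ))⁻¹ := by
        intro k
        have h2 : (2 : PowerSeries ℝ) = PowerSeries.C (R := ℝ) 2 := by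
          simp [← map_ofNat (PowerSeries.C (R := ℝ)) 2]
        simp [h2, PowerSeries.coeff_exp, PowerSeries.coeff_C]
      rw [Finset.sum_range_succ']
      simp only [Nat.sub_zero, lt_irrefl, if_false, add_zero]
      have hcond : ∀ k ∈ range n, n - (k + 1) < n := fun k _ => Nat.sub_lt hn k.succ_pos
      rw [Finset.sum_congr rfl (fun k hk => if_pos (hcond k hk))]
      have step1 : ∑ k ∈ range n, PowerSeries.coeff (k+1) (2 - PowerSeries.exp ℝ) *
          PowerSeries.coeff (n-(k+1)) (2 - PowerSeries.exp ℝ)⁻¹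
          = -∑ k ∈ range n, (((k + 1).factorial : ℝ))⁻¹ *
              PowerSeries.coeff (n-(k+1)) (2 - PowerSeries.exp ℝ)⁻¹ := by
        rw [← Finset.sum_neg_distrib]
        exact Finset.sum_congr rfl fun k _ => by rw [hcoeff]; ring
      rw [step1, inv_one, neg_one_mul, neg_neg]
      calc ∑ k ∈ range n, (((k + 1).factorial : ℝ))⁻¹ *
              PowerSeries.coeff (n-(k+1)) (2 - PowerSeries.exp ℝ)⁻¹
          ≤ ∑ k ∈ range n, (((k + 1).factorial : ℝ))⁻¹ * (Real.log 2)⁻¹ ^ (n - (k+1)) := by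
            refine Finset.sum_le_sum fun k hk => ?_
            exact mul_le_mul_of_nonneg_left (ih _ (hcond k hk)) (by positivity)
        _ = (Real.log 2)⁻¹ ^ n * ∑ k ∈ range n, (Real.log 2) ^ (k+1) / ((k+1).factorial : ℝ) := by
            rw [Finset.mul_sum]
            refine Finset.sum_congr rfl fun k hk => ?_
            have hkn : k + 1 ≤ n := Nat.succ_le_of_lt (Finset.mem_range.mp hk)
            have hp : Real.log 2 ^ (k+1) * Real.log 2 ^ (n-(k+1)) = Real.log 2 ^ n := by
              rw [← pow_add, Nat.add_sub_cancel' hkn]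
            rw [inv_pow, eq_comm]
            rw [inv_pow, ← hp]
            field_simp
        _ ≤ (Real.log 2)⁻¹ ^ n * 1 := by
            refine mul_le_mul_of_nonneg_left ?_ (by positivity)
            have h2 : ∑ k ∈ range (n+1), (Real.log 2) ^ k / (k.factorial : ℝ) ≤ Real.exp (Real.log 2) :=
              Real.sum_le_exp_of_nonneg hL.le _
            rw [Real.exp_log (by norm_num : (0:ℝ) < 2)] at h2
            rw [Finset.sum_range_succ'] at h2
            norm_num at h2
            linarith
        _ = (Real.log 2)⁻¹ ^ n := mul_one _

/-- for `k ≥ 1`, `[x^k] 1/(2 − e^x) ≤ 1/(log 2)^k`. -/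
theorem cusick_stmt14 (k : ℕ) (hk : 1 ≤ k) :
    PowerSeries.coeff k (2 - PowerSeries.exp ℝ)⁻¹ ≤ 1 / (Real.log 2) ^ k := by
  rw [one_div, ← inv_pow]
  exact cusick14_aux k
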